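/- Let N, M > 1 be integers and let I be the OOEBP instance consisting of N items of size 1 followed by N(M−1) items of size 1/M. Then OPT(I) = N + ⌈N(M−1)/M⌉. (Consequently, since these items can be packed into N bins when reordering is allowed, the ratio between the ordered and reorderable optimal costs tends to 2 as M grows.) -/

import Mathlib

open scoped BigOperators Classical

namespace OOEBP

noncomputable section

/-- Load of bin `b` under packing `p` of instance `s`. -/
def binLoad (s : List ℝ) (p : ℕ → ℕ) (b : ℕ) : ℝ :=
  ∑ j ∈ Finset.range s.length, if p j = b then s.getD j 0 else 0

/-- A packing is feasible if each item is placed into a bin whose current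
load (total size of earlier items in the same bin) is strictly below 1. -/
def Feasible (s : List ℝ) (p : ℕ → ℕ) : Prop :=
  ∀ i < s.length,
    (∑ j ∈ Finset.range i, if p j = p i then s.getD j 0 else 0) < 1

/-- The cost of a packing: the number of nonempty bins. -/
def cost (s : List ℝ) (p : ℕ → ℕ) : ℕ :=
  ((Finset.range s.length).image p).card

/-- Optimal cost of a feasible packing of `s`. -/
def OPT (s : List ℝ) : ℕ :=
  sInf {m | ∃ p, Feasible s p ∧ cost s p = m}

/-- Item `i` is the exceeding item of its bin: the bin's total size is at
least 1 and `i` is the item of maximum index in its bin. -/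
def IsExceeding (s : List ℝ) (p : ℕ → ℕ) (i : ℕ) : Prop :=
  i < s.length ∧ 1 ≤ binLoad s p (p i) ∧
    ∀ j, i < j → j < s.length → p j ≠ p i

private lemma getD_big {N K : ℕ} {x : ℝ} {j : ℕ} (hj : j < N) :
    (List.replicate N (1:ℝ) ++ List.replicate K x).getD j 0 = 1 := by
  rw [List.getD_append _ _ _ _ (by simpa using hj)]
  simp [List.getD, List.getElem?_replicate, hj]

private lemma getD_small {N K : ℕ} {x : ℝ} {j : ℕ} (h1 : N ≤ j) (h2 : j < N + K) :
    (List.replicate N (1:ℝ) ++ List.replicate K x).getD j 0 = x := by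
  rw [List.getD_append_right _ _ _ _ (by simpa using h1)]
  simp only [List.length_replicate, List.getD,
    List.getElem?_replicate]
  rw [if_pos (by omega)]
  rfl

private lemma getD_nn {N K : ℕ} {x : ℝ} (hx : 0 ≤ x) (j : ℕ) :
    0 ≤ (List.replicate N (1:ℝ) ++ List.replicate K x).getD j 0 := by
  rcases lt_or_ge j N with h | h
  · rw [getD_big h]; norm_num
  · rcases lt_or_ge j (N + K) with h2 | h2
    · rw [getD_small h h2]; exact hx
    · rw [List.getD_eq_default _ _ (by simp; omega)]

/-- A bin containing a size-1 item cannot receive any later item. -/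
private lemma big_excl {N K : ℕ} {s : List ℝ} (hlen : s.length = N + K)
    (hbig : ∀ j < N, s.getD j 0 = 1)
    (hnn : ∀ j, 0 ≤ s.getD j 0) {p : ℕ → ℕ}
    (hp : Feasible s p) {i i' : ℕ} (hi : i < N) (hii' : i < i') (hi' : i' < N + K) :
    p i' ≠ p i := by
  intro heq
  have hfe := hp i' (by rw [hlen]; exact hi')
  have h2 := Finset.single_le_sum
      (f := fun j => if p j = p i' then s.getD j 0 else 0)
      (fun j _ => by split; exacts [hnn j, le_refl 0])
      (Finset.mem_range.2 hii')
  rw [if_pos heq.symm, hbig i hi] at h2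
  linarith

/-- A bin receives at most `M` small items. -/
private lemma fiber_le {N K M : ℕ} {x : ℝ} {s : List ℝ} (hlen : s.length = N + K)
    (hsmall : ∀ j, N ≤ j → j < N + K → s.getD j 0 = x)
    (hnn : ∀ j, 0 ≤ s.getD j 0) (hx0 : 0 ≤ x) (hx1 : 1 ≤ (M : ℝ) * x)
    {p : ℕ → ℕ} (hp : Feasible s p) (b : ℕ) :
    ((Finset.Ico N (N + K)).filter (fun j => p j = b)).card ≤ M := by
  by_contra hcard
  push_neg at hcard
  set S := (Finset.Ico N (N + K)).filter (fun j => p j = b) with hS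
  have hne : S.Nonempty := Finset.card_pos.1 (by omega)
  set i := S.max' hne with hidef
  have hiS : i ∈ S := S.max'_mem hne
  obtain ⟨hiIco, hpi⟩ := Finset.mem_filter.1 hiS
  rw [Finset.mem_Ico] at hiIco
  have hfe := hp i (by rw [hlen]; omega)
  have hsub : S.erase i ⊆ Finset.range i := by
    intro j hj
    have hjS := Finset.mem_of_mem_erase hj
    have hle := S.le_max' j hjS
    have hne' := Finset.ne_of_mem_erase hj
    rw [Finset.mem_range]
    omega
  have hle : ∑ j ∈ S.erase i, (if p j = p i then s.getD j 0 else 0)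
      ≤ ∑ j ∈ Finset.range i, (if p j = p i then s.getD j 0 else 0) := by
    apply Finset.sum_le_sum_of_subset_of_nonneg hsub
    intro j _ _
    split; exacts [hnn j, le_refl 0]
  have heval : ∀ j ∈ S.erase i, (if p j = p i then s.getD j 0 else 0) = x := by
    intro j hj
    have hjS := Finset.mem_of_mem_erase hj
    obtain ⟨hjIco, hpj⟩ := Finset.mem_filter.1 hjS
    rw [Finset.mem_Ico] at hjIco
    rw [if_pos (by rw [hpj, hpi]), hsmall j hjIco.1 hjIco.2]
  rw [Finset.sum_congr rfl heval, Finset.sum_const, nsmul_eq_mul] at hle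
  have hcard' : M ≤ (S.erase i).card := by
    rw [Finset.card_erase_of_mem hiS]; omega
  have h1 : (1:ℝ) ≤ ∑ j ∈ Finset.range i, (if p j = p i then s.getD j 0 else 0) := by
    calc (1:ℝ) ≤ (M : ℝ) * x := hx1
      _ ≤ ((S.erase i).card : ℝ) * x := by
          apply mul_le_mul_of_nonneg_right _ hx0
          exact_mod_cast hcard'
      _ ≤ _ := hle
  linarith

/-- for the instance consisting of `N` items of size 1 followed
by `N(M−1)` items of size `1/M`, the ordered optimum is `N + ⌈N(M−1)/M⌉`. -/
theorem stmt5 (N M : ℕ) (hN : 1 < N) (hM : 1 < M) :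
    OPT (List.replicate N (1 : ℝ) ++
         List.replicate (N * (M - 1)) ((1 : ℝ) / M)) =
      N + ⌈((N * (M - 1) : ℕ) : ℝ) / M⌉₊ := by
  have hM0 : (0:ℝ) < (M:ℝ) := by exact_mod_cast (by omega : 0 < M)
  set K := N * (M - 1) with hK
  set x : ℝ := (1:ℝ) / (M:ℝ) with hxdef
  set c := ⌈((K : ℕ) : ℝ) / (M:ℝ)⌉₊ with hcdef
  set s := List.replicate N (1:ℝ) ++ List.replicate K x with hs
  have hx0 : 0 ≤ x := by rw [hxdef]; positivity
  have hlen : s.length = N + K := by rw [hs]; simp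
  have hgb : ∀ j < N, s.getD j 0 = 1 := by
    intro j hj; rw [hs]; exact getD_big hj
  have hgs : ∀ j, N ≤ j → j < N + K → s.getD j 0 = x := by
    intro j h1 h2; rw [hs]; exact getD_small h1 h2
  have hnn : ∀ j, 0 ≤ s.getD j 0 := by
    intro j; rw [hs]; exact getD_nn hx0 j
  have hc1 : K ≤ c * M := by
    have h := Nat.le_ceil ((K:ℝ) / (M:ℝ))
    rw [div_le_iff₀ hM0] at h
    exact_mod_cast h
  have hc2 : ∀ m, K ≤ m * M → c ≤ m := by
    intro m hm
    apply Nat.ceil_le.2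
    rw [div_le_iff₀ hM0]
    exact_mod_cast hm
  -- the explicit packing
  set q : ℕ → ℕ := fun i => if i < N then i else N + (i - N) / M with hq
  have hqfeas : Feasible s q := by
    intro i hi
    rw [hlen] at hi
    rcases lt_or_ge i N with hiN | hiN
    · have hz : ∀ j ∈ Finset.range i, (if q j = q i then s.getD j 0 else 0) = 0 := by
        intro j hj
        rw [Finset.mem_range] at hj
        rw [if_neg]
        simp only [hq]
        rw [if_pos (by omega), if_pos hiN]
        omega
      rw [Finset.sum_eq_zero hz]; norm_num
    · set qv := (i - N) / M with hqv
      have hbound : ∀ j ∈ Finset.range i, (if q j = q i then s.getD j 0 else 0)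
          ≤ (if j ∈ Finset.Ico (N + qv * M) i then x else 0) := by
        intro j hj
        rw [Finset.mem_range] at hj
        by_cases hqe : q j = q i
        · rw [if_pos hqe]
          have hjN : N ≤ j := by
            by_contra hjN
            push_neg at hjN
            simp only [hq] at hqe
            rw [if_pos hjN, if_neg (by omega)] at hqe
            have hge : N ≤ j := by rw [hqe]; exact Nat.le_add_right _ _
            omega
          have hjv : (j - N) / M = qv := by
            simp only [hq] at hqe
            rw [if_neg (by omega), if_neg (by omega)] at hqe
            rw [hqv]
            omega
          have h2 : qv * M ≤ j - N := by
            rw [← hjv]; exact Nat.div_mul_le_self _ _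
          rw [if_pos (Finset.mem_Ico.2 ⟨by omega, hj⟩), hgs j hjN (by omega)]
        · rw [if_neg hqe]
          split
          · exact hx0
          · exact le_refl 0
      calc ∑ j ∈ Finset.range i, (if q j = q i then s.getD j 0 else 0)
          ≤ ∑ j ∈ Finset.range i, (if j ∈ Finset.Ico (N + qv * M) i then x else 0) :=
            Finset.sum_le_sum hbound
        _ = ∑ j ∈ Finset.Ico (N + qv * M) i, x := by
            rw [Finset.sum_ite_mem]
            congr 1
            apply Finset.ext
            intro j
            simp only [Finset.mem_inter, Finset.mem_range, Finset.mem_Ico]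
            omega
        _ = ((i - (N + qv * M) : ℕ) : ℝ) * x := by
            rw [Finset.sum_const, Nat.card_Ico, nsmul_eq_mul]
        _ ≤ ((M - 1 : ℕ) : ℝ) * x := by
            apply mul_le_mul_of_nonneg_right _ hx0
            have h1 := Nat.div_add_mod (i - N) M
            rw [← hqv] at h1
            have h2 : (i - N) % M < M := Nat.mod_lt _ (by omega)
            have h3 : i - (N + qv * M) ≤ M - 1 := by
              rw [Nat.mul_comm]
              omega
            exact_mod_cast h3
        _ < 1 := by
            rw [hxdef, Nat.cast_sub (by omega : 1 ≤ M), Nat.cast_one]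
            have he : ((M:ℝ) - 1) * (1 / (M:ℝ)) = 1 - 1 / (M:ℝ) := by field_simp
            have hp : 0 < 1 / (M:ℝ) := by positivity
            rw [he]; linarith
  have hqcost : cost s q = N + c := by
    have himg : (Finset.range s.length).image q = Finset.range (N + c) := by
      rw [hlen]
      apply Finset.ext
      intro b
      simp only [Finset.mem_image, Finset.mem_range]
      constructor
      · rintro ⟨i, hi, rfl⟩
        simp only [hq]
        split
        · omega
        · next h =>
          have : (i - N) / M < c := by
            rw [Nat.div_lt_iff_lt_mul (by omega : 0 < M)]
            omega
          omega
      · intro hb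
        rcases lt_or_ge b N with h | h
        · exact ⟨b, by omega, by simp only [hq]; rw [if_pos h]⟩
        · refine ⟨N + (b - N) * M, ?_, ?_⟩
          · have hbc : b - N < c := by omega
            have hlt : ¬ (K ≤ (b - N) * M) := fun hK' => absurd (hc2 _ hK') (by omega)
            omega
          · simp only [hq]
            rw [if_neg (by omega), Nat.add_sub_cancel_left,
              Nat.mul_div_cancel _ (by omega : 0 < M)]
            omega
    rw [cost, himg, Finset.card_range]
  have hlower : ∀ p, Feasible s p → N + c ≤ cost s p := by
    intro p hp
    set A := (Finset.range N).image p with hA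
    set B := (Finset.Ico N (N + K)).image p with hB
    have hexcl : ∀ i < N, ∀ i', i < i' → i' < N + K → p i' ≠ p i := by
      intro i hi i' h1 h2
      exact big_excl hlen hgb hnn hp hi h1 h2
    have hAcard : A.card = N := by
      rw [hA, Finset.card_image_of_injOn, Finset.card_range]
      intro a ha b hb hab
      simp only [Finset.coe_range, Set.mem_Iio] at ha hb
      by_contra hne
      rcases Nat.lt_or_ge a b with h | h
      · exact hexcl a ha b h (by omega) hab.symm
      · exact hexcl b hb a (by omega) (by omega) hab
    have hdisj : Disjoint A B := by
      rw [Finset.disjoint_left]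
      rintro bb hbA hbB
      rw [hA] at hbA; rw [hB] at hbB
      obtain ⟨i, hi, rfl⟩ := Finset.mem_image.1 hbA
      obtain ⟨i', hi', he⟩ := Finset.mem_image.1 hbB
      rw [Finset.mem_range] at hi
      rw [Finset.mem_Ico] at hi'
      exact hexcl i hi i' (by omega) (by omega) he
    have hBcard : c ≤ B.card := by
      apply hc2
      have hfib := Finset.card_eq_sum_card_fiberwise
        (s := Finset.Ico N (N + K)) (t := B) (f := p)
        (fun j hj => Finset.mem_image_of_mem p hj)
      rw [Nat.card_Ico, Nat.add_sub_cancel_left] at hfib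
      calc K = ∑ b ∈ B, ((Finset.Ico N (N + K)).filter (fun j => p j = b)).card := hfib
        _ ≤ ∑ _b ∈ B, M := by
            apply Finset.sum_le_sum
            intro b _
            exact fiber_le hlen hgs hnn hx0
              (le_of_eq (by rw [hxdef]; field_simp)) hp b
        _ = B.card * M := by rw [Finset.sum_const, smul_eq_mul]
    have hcosteq : cost s p = (A ∪ B).card := by
      rw [cost, hlen]
      congr 1
      rw [hA, hB, ← Finset.image_union]
      congr 1
      simp only [Finset.range_eq_Ico]
      exact (Finset.Ico_union_Ico_eq_Ico (by omega) (by omega)).symm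
    rw [hcosteq, Finset.card_union_of_disjoint hdisj, hAcard]
    omega
  have hmem : N + c ∈ {m | ∃ p, Feasible s p ∧ cost s p = m} := ⟨q, hqfeas, hqcost⟩
  have h1 : OPT s ≤ N + c := Nat.sInf_le hmem
  have h2 : N + c ≤ OPT s := by
    apply le_csInf ⟨_, hmem⟩
    rintro m ⟨p, hf, rfl⟩
    exact hlower p hf
  exact le_antisymm h1 h2

end

end OOEBP
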